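/- arXiv:2504.03406 — 5 statements merged into one kernel-verified Lean document; each statement's English description precedes it below -/
import Mathlib

section
/- Let N ∈ ℝ^{m×m} be symmetric positive semidefinite with strictly positive diagonal entries. Define M ∈ ℝ^{m×m} by M(i,j) = -N(i,j)² / (N(i,i)·N(j,j)) for i ≠ j and M(i,i) = 0. Then M ⪯ I. -/
/-- For a symmetric PSD matrix `N` with strictly positive diagonal, the matrix
`M` with `M i j = -N(i,j)²/(N(i,i)·N(j,j))` off the diagonal and zero diagonal
satisfies `M ⪯ I`. -/
theorem stmt6 {m : ℕ} (N : Matrix (Fin m) (Fin m) ℝ) (hN : N.PosSemidef)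
    (hdiag : ∀ i, 0 < N i i) :
    ((1 : Matrix (Fin m) (Fin m) ℝ) -
      Matrix.of (fun i j => if i = j then 0 else -(N i j) ^ 2 / (N i i * N j j))).PosSemidef := by
  obtain ⟨C, hC⟩ : ∃ C : Matrix (Fin m) (Fin m) ℝ, N = C.conjTranspose * C := by
    open scoped MatrixOrder in
    obtain ⟨a, ha⟩ := CStarAlgebra.nonneg_iff_eq_star_mul_self.mp hN.nonneg
    exact ⟨a, by simpa [Matrix.star_eq_conjTranspose] using ha⟩
  have hNij : ∀ i j, N i j = ∑ k, C k i * C k j := by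
    intro i j
    rw [hC]
    simp [Matrix.mul_apply, Matrix.conjTranspose_apply]
  set W : Matrix (Fin m × Fin m) (Fin m) ℝ :=
    fun p i => C p.1 i * C p.2 i / N i i with hW
  have key : ((1 : Matrix (Fin m) (Fin m) ℝ) -
      Matrix.of (fun i j => if i = j then 0 else -(N i j) ^ 2 / (N i i * N j j))) = W.conjTranspose * W := by
    ext i j
    have hrhs : (W.conjTranspose * W) i j = (N i j) ^ 2 / (N i i * N j j) := by
      rw [Matrix.mul_apply]
      simp only [Matrix.conjTranspose_apply, star_trivial]
      simp only [Matrix.conjTranspose_apply, hW, RCLike.star_def, starRingEnd_apply, star_trivial]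
      rw [Fintype.sum_prod_type]
      have : ∀ k, ∑ l, (C k i * C l i / N i i) * (C k j * C l j / N j j)
          = (C k i * C k j) * (∑ l, C l i * C l j) / (N i i * N j j) := by
        intro k
        rw [Finset.mul_sum, Finset.sum_div]
        exact Finset.sum_congr rfl fun l _ => by
          field_simp
      rw [Finset.sum_congr rfl fun k _ => this k]
      rw [← Finset.sum_div, ← Finset.sum_mul, ← hNij]
      ring
    rw [hrhs]
    by_cases h : i = j
    · subst h
      simp only [Matrix.sub_apply, Matrix.one_apply_eq, Matrix.of_apply, if_pos rfl, if_true, sub_zero]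
      field_simp [(hdiag i).ne']
    · simp only [Matrix.sub_apply, Matrix.one_apply_ne h, Matrix.of_apply, if_neg h, zero_sub,
        neg_div, neg_neg]
  rw [key]
  exact Matrix.posSemidef_conjTranspose_mul_self W
end

section
/- Let X ⊆ {0,1}^n be a nonempty downward closed family, μ fully supported on X, and let φ : ℕ → ℝ≥0 be log-concave (φ(k)² ≥ φ(k-1)φ(k+1)) with no internal zeros and φ(0) > 0. Define ν(S) ∝ φ(|S|)μ(S) on X. Then for every non-maximal S ∈ X with |S| = k and both pairwise dependency matrices defined, M_S(ν) = c·(M_S(μ) + J - I) - (J - I) where c = φ(k+2)φ(k)/φ(k+1)² ∈ [0,1] and J is the all-ones matrix on V_S; consequently M_S(μ) ⪯ I implies M_S(ν) ⪯ I. -/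
/-- The pairwise dependency matrix entry of an (unnormalized) weight `μ` at a
conditioning set `S`. -/
noncomputable def depMatrix {n : ℕ} (μ : Finset (Fin n) → ℝ) (S : Finset (Fin n))
    (i j : Fin n) : ℝ :=
  if i = j then 0
  else μ (insert i (insert j S)) * μ S / (μ (insert i S) * μ (insert j S)) - 1

private lemma psd_smul {m : Type*} [Fintype m] {A : Matrix m m ℝ} (hA : A.PosSemidef)
    {c : ℝ} (hc : 0 ≤ c) : (c • A).PosSemidef := by
  refine Matrix.PosSemidef.of_dotProduct_mulVec_nonneg ?_ (fun x => ?_)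
  · unfold Matrix.IsHermitian
    rw [Matrix.conjTranspose_smul, hA.1]
    simp
  · have := hA.dotProduct_mulVec_nonneg x
    simp only [Matrix.smul_mulVec, dotProduct_smul, smul_eq_mul]
    exact mul_nonneg hc this

private lemma psd_ones {m : Type*} [Fintype m] :
    (Matrix.of (fun _ _ : m => (1 : ℝ))).PosSemidef := by
  refine Matrix.PosSemidef.of_dotProduct_mulVec_nonneg ?_ (fun x => ?_)
  · unfold Matrix.IsHermitian
    ext i j
    simp [Matrix.conjTranspose_apply]
  · have : dotProduct (star x) ((Matrix.of (fun _ _ : m => (1 : ℝ))).mulVec x)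
        = (∑ i, x i) * (∑ j, x j) := by
      simp [Matrix.mulVec, dotProduct, Finset.sum_mul, star]
    rw [this]
    exact mul_self_nonneg _

/-- Reweighting a distribution on a downward closed family by a log-concave function of
the size: `ν(T) ∝ φ(|T|)·μ(T)`.  For a non-maximal `S` with `|S| = k`, one has
`M_S(ν) = c·(M_S(μ) + J - I) - (J - I)` with `c = φ(k+2)φ(k)/φ(k+1)² ∈ [0,1]`; hence
`M_S(μ) ⪯ I` implies `M_S(ν) ⪯ I`. -/
theorem stmt13 {n : ℕ} (X : Finset (Finset (Fin n))) (hX : X.Nonempty)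
    (hdc : ∀ S T : Finset (Fin n), T ∈ X → S ⊆ T → S ∈ X)
    (μ : Finset (Fin n) → ℝ)
    (hsupp : ∀ S, 0 < μ S ↔ S ∈ X) (hzero : ∀ S, S ∉ X → μ S = 0)
    (φ : ℕ → ℝ) (hφnonneg : ∀ m, 0 ≤ φ m)
    (hφlc : ∀ m : ℕ, 1 ≤ m → φ (m - 1) * φ (m + 1) ≤ φ m ^ 2)
    (hφniz : ∀ m₁ m₂ m : ℕ, m₁ ≤ m → m ≤ m₂ → 0 < φ m₁ → 0 < φ m₂ → 0 < φ m)
    (hφ0 : 0 < φ 0)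
    (S : Finset (Fin n)) (hS : S ∈ X) (hnonmax : ∃ i ∉ S, insert i S ∈ X)
    (k : ℕ) (hk : S.card = k)
    (c : ℝ) (hc : c = φ (k + 2) * φ k / φ (k + 1) ^ 2) :
    0 ≤ c ∧ c ≤ 1 ∧
    (∀ i j : {a : Fin n // a ∉ S ∧ insert a S ∈ X},
      depMatrix (fun T => φ T.card * μ T) S i.1 j.1 =
        c * (depMatrix μ S i.1 j.1 + 1 - (if i = j then 1 else 0))
          - (1 - (if i = j then 1 else 0))) ∧
    (((1 : Matrix {a : Fin n // a ∉ S ∧ insert a S ∈ X} {a : Fin n // a ∉ S ∧ insert a S ∈ X} ℝ)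
        - Matrix.of (fun (i j : {a : Fin n // a ∉ S ∧ insert a S ∈ X}) => depMatrix μ S i.1 j.1)).PosSemidef →
      ((1 : Matrix {a : Fin n // a ∉ S ∧ insert a S ∈ X} {a : Fin n // a ∉ S ∧ insert a S ∈ X} ℝ)
        - Matrix.of (fun (i j : {a : Fin n // a ∉ S ∧ insert a S ∈ X}) => depMatrix (fun T => φ T.card * μ T) S i.1 j.1)).PosSemidef) := by
  have hc0 : 0 ≤ c := by
    rw [hc]
    exact div_nonneg (mul_nonneg (hφnonneg _) (hφnonneg _)) (sq_nonneg _)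
  have hc1 : c ≤ 1 := by
    rw [hc]
    by_cases hp : φ (k + 1) = 0
    · simp [hp]
    · have hp2 : 0 < φ (k + 1) ^ 2 := by positivity
      rw [div_le_one hp2]
      have := hφlc (k + 1) (by omega)
      simpa [mul_comm] using this
  have hform : ∀ i j : {a : Fin n // a ∉ S ∧ insert a S ∈ X},
      depMatrix (fun T => φ T.card * μ T) S i.1 j.1 =
        c * (depMatrix μ S i.1 j.1 + 1 - (if i = j then 1 else 0))
          - (1 - (if i = j then 1 else 0)) := by
    intro i j
    by_cases hij : i = j
    · subst hij
      simp [depMatrix]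
    · have hij' : i.1 ≠ j.1 := fun h => hij (Subtype.ext h)
      obtain ⟨hiS, hiX⟩ := i.2
      obtain ⟨hjS, hjX⟩ := j.2
      have h1 : (insert i.1 S).card = k + 1 := by
        rw [Finset.card_insert_of_notMem hiS, hk]
      have h2 : (insert j.1 S).card = k + 1 := by
        rw [Finset.card_insert_of_notMem hjS, hk]
      have h3 : (insert i.1 (insert j.1 S)).card = k + 2 := by
        have : i.1 ∉ insert j.1 S := by simp [Finset.mem_insert, hij', hiS]
        rw [Finset.card_insert_of_notMem this, h2]
      simp only [depMatrix, if_neg hij', if_neg hij, h1, h2, h3, hc, hk]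
      ring
  refine ⟨hc0, hc1, hform, fun hA => ?_⟩
  have key :
      ((1 : Matrix {a : Fin n // a ∉ S ∧ insert a S ∈ X} {a : Fin n // a ∉ S ∧ insert a S ∈ X} ℝ)
        - Matrix.of (fun i j => depMatrix (fun T => φ T.card * μ T) S i.1 j.1))
      = c • ((1 : Matrix {a : Fin n // a ∉ S ∧ insert a S ∈ X} {a : Fin n // a ∉ S ∧ insert a S ∈ X} ℝ)
          - Matrix.of (fun i j => depMatrix μ S i.1 j.1))
        + (1 - c) • Matrix.of (fun _ _ => (1 : ℝ)) := by
    ext i j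
    simp only [Matrix.sub_apply, Matrix.one_apply, Matrix.of_apply, Matrix.add_apply,
      Matrix.smul_apply, smul_eq_mul, hform i j]
    by_cases hij : i = j <;> simp [hij] <;> ring
  rw [key]
  refine Matrix.PosSemidef.of_dotProduct_mulVec_nonneg ?_ (fun x => ?_)
  · have hH1 := (psd_smul hA hc0).1
    have hH2 := (psd_smul (psd_ones (m := {a : Fin n // a ∉ S ∧ insert a S ∈ X}))
      (by linarith : (0:ℝ) ≤ 1 - c)).1
    unfold Matrix.IsHermitian at *
    rw [Matrix.conjTranspose_add, hH1, hH2]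
  · have h1 := (psd_smul hA hc0).dotProduct_mulVec_nonneg x
    have h2 := (psd_smul (psd_ones (m := {a : Fin n // a ∉ S ∧ insert a S ∈ X}))
      (by linarith : (0:ℝ) ≤ 1 - c)).dotProduct_mulVec_nonneg x
    rw [Matrix.add_mulVec, dotProduct_add]
    exact add_nonneg h1 h2
end

section
/- Let μ be a distribution on {0,1}^n with generating polynomial g_μ(z) = Σ_S μ(S)∏_{i∈S} z_i. For z ∈ ℝⁿ_{>0}, let z*μ denote the tilted distribution (z*μ)(S) ∝ μ(S)∏_{i∈S} z_i. Then the Hessian of log g_μ at z satisfies ∇² log g_μ(z) = diag(z)^{-1} (Cov(z*μ) - diag(m(z*μ))) diag(z)^{-1}. In particular, log g_μ is concave at z iff Cov(z*μ) ⪯ diag(m(z*μ)). -/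
open ContinuousLinearMap Filter


/-- For a distribution `μ` on `{0,1}^n` with generating polynomial
`g(z) = Σ_S μ(S) ∏_{i∈S} z_i`, at any `z ∈ ℝⁿ_{>0}` the Hessian of `log g` equals
`diag(z)⁻¹ (Cov(z*μ) - diag(m(z*μ))) diag(z)⁻¹`; in particular `log g` is concave at `z`
(its Hessian is negative semidefinite) iff `Cov(z*μ) ⪯ diag(m(z*μ))`. -/
theorem stmt16 {n : ℕ} (μ : Finset (Fin n) → ℝ)
    (hnonneg : ∀ S, 0 ≤ μ S) (hsum : ∑ S : Finset (Fin n), μ S = 1)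
    (g : (Fin n → ℝ) → ℝ)
    (hg : g = fun z => ∑ S : Finset (Fin n), μ S * ∏ i ∈ S, z i)
    (m : (Fin n → ℝ) → Fin n → ℝ)
    (hm : m = fun z a =>
      (∑ S : Finset (Fin n), (if a ∈ S then μ S * ∏ i ∈ S, z i else 0)) / g z)
    (C : (Fin n → ℝ) → Fin n → Fin n → ℝ)
    (hC : C = fun z a b =>
      (∑ S : Finset (Fin n), (if a ∈ S ∧ b ∈ S then μ S * ∏ i ∈ S, z i else 0)) / g z
        - m z a * m z b)
    (z : Fin n → ℝ) (hz : ∀ i, 0 < z i) :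
    (∀ a b : Fin n,
      fderiv ℝ (fun y => fderiv ℝ (fun w => Real.log (g w)) y (Pi.single b 1)) z
          (Pi.single a 1)
        = (C z a b - (if a = b then m z a else 0)) / (z a * z b)) ∧
    ((Matrix.of (fun a b : Fin n =>
        - fderiv ℝ (fun y => fderiv ℝ (fun w => Real.log (g w)) y (Pi.single b 1)) z
            (Pi.single a 1))).PosSemidef ↔
      (Matrix.of (fun a b : Fin n =>
        (if a = b then m z a else 0) - C z a b)).PosSemidef) := by
  classical
  have hzne : ∀ i, z i ≠ 0 := fun i => (hz i).ne'
  -- positivity of g at z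
  have hμpos : ∃ S : Finset (Fin n), 0 < μ S := by
    by_contra h
    push_neg at h
    have h0 : ∀ S, μ S = 0 := fun S => le_antisymm (h S) (hnonneg S)
    simp [h0] at hsum
  have hgzpos : 0 < g z := by
    rw [hg]
    obtain ⟨S0, hS0⟩ := hμpos
    exact Finset.sum_pos'
      (fun S _ => mul_nonneg (hnonneg S) (Finset.prod_pos fun i _ => hz i).le)
      ⟨S0, Finset.mem_univ _, mul_pos hS0 (Finset.prod_pos fun i _ => hz i)⟩
  have hgz : g z ≠ 0 := hgzpos.ne'
  -- derivative of g
  set G : (Fin n → ℝ) → (Fin n → ℝ) →L[ℝ] ℝ := fun y =>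
    ∑ S : Finset (Fin n), μ S • ∑ i ∈ S, (∏ j ∈ S.erase i, y j) • (proj i : (Fin n → ℝ) →L[ℝ] ℝ)
    with hG
  have hgd : ∀ y, HasFDerivAt g (G y) y := by
    intro y
    rw [hg]
    exact HasFDerivAt.fun_sum fun S _ =>
      (HasFDerivAt.finset_prod (fun i _ => hasFDerivAt_apply i y)).const_mul (μ S)
  set pg : Fin n → (Fin n → ℝ) → ℝ := fun b y =>
    ∑ S : Finset (Fin n), if b ∈ S then μ S * ∏ j ∈ S.erase b, y j else 0 with hpg
  have hGapp : ∀ y b, G y (Pi.single b 1) = pg b y := by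
    intro y b
    simp [hG, hpg, ContinuousLinearMap.sum_apply, Pi.single_apply, mul_ite]
  -- continuity of g
  have hcont : Continuous g := by
    rw [hg]
    exact continuous_finset_sum _ fun S _ =>
      continuous_const.mul (continuous_finset_prod _ fun i _ => continuous_apply i)
  have hU : {y | g y ≠ 0} ∈ nhds z :=
    (isOpen_compl_singleton.preimage hcont).mem_nhds hgz
  -- derivative of pg b
  set PG : Fin n → (Fin n → ℝ) → (Fin n → ℝ) →L[ℝ] ℝ := fun b y =>
    ∑ S : Finset (Fin n), if b ∈ S then
      μ S • ∑ i ∈ S.erase b, (∏ j ∈ (S.erase b).erase i, y j) • (proj i : (Fin n → ℝ) →L[ℝ] ℝ)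
    else 0 with hPG
  have hpgd : ∀ b y, HasFDerivAt (pg b) (PG b y) y := by
    intro b y
    rw [hpg, hPG]
    apply HasFDerivAt.fun_sum
    intro S _
    by_cases hbS : b ∈ S
    · simp only [if_pos hbS]
      exact (HasFDerivAt.finset_prod (fun i _ => hasFDerivAt_apply i y)).const_mul (μ S)
    · simp only [if_neg hbS]
      exact hasFDerivAt_const 0 y
  set q : Fin n → Fin n → ℝ := fun a b => PG b z (Pi.single a 1) with hq
  have hqval : ∀ a b, q a b = ∑ S : Finset (Fin n),
      if b ∈ S then (if a ∈ S.erase b then μ S * ∏ j ∈ (S.erase b).erase a, z j else 0) else 0 := by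
    intro a b
    simp [hq, hPG, ContinuousLinearMap.sum_apply, Pi.single_apply, mul_ite,
      apply_ite (fun (L : (Fin n → ℝ) →L[ℝ] ℝ) => L (Pi.single a 1))]
  -- first derivative of log ∘ g
  have hlogd : ∀ y, g y ≠ 0 →
      fderiv ℝ (fun w => Real.log (g w)) y = (g y)⁻¹ • G y := fun y hy =>
    ((hgd y).log hy).fderiv
  have hev : ∀ b, (fun y => fderiv ℝ (fun w => Real.log (g w)) y (Pi.single b 1))
      =ᶠ[nhds z] (fun y => (g y)⁻¹ * pg b y) := by
    intro b
    filter_upwards [hU] with y hy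
    rw [hlogd y hy]
    simp [hGapp y b]
  -- second derivative
  have hmain : ∀ a b : Fin n,
      fderiv ℝ (fun y => fderiv ℝ (fun w => Real.log (g w)) y (Pi.single b 1)) z
        (Pi.single a 1)
      = (g z)⁻¹ * q a b - pg b z * (((g z)^2)⁻¹ * pg a z) := by
    intro a b
    have hinv : HasFDerivAt (fun y => (g y)⁻¹) ((-((g z)^2)⁻¹) • G z) z :=
      (hasDerivAt_inv hgz).comp_hasFDerivAt z (hgd z)
    have hF2 : HasFDerivAt (fun y => (g y)⁻¹ * pg b y)
        ((g z)⁻¹ • PG b z + pg b z • ((-((g z)^2)⁻¹) • G z)) z := hinv.mul (hpgd b z)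
    rw [(hev b).fderiv_eq, hF2.fderiv]
    simp [hGapp z a, hq]
    ring
  -- sum identities
  have hA : ∀ a : Fin n, (∑ S : Finset (Fin n), if a ∈ S then μ S * ∏ i ∈ S, z i else 0)
      = z a * pg a z := by
    intro a
    rw [hpg, Finset.mul_sum]
    refine Finset.sum_congr rfl fun S _ => ?_
    by_cases h : a ∈ S
    · simp only [if_pos h]
      rw [← Finset.mul_prod_erase S z h]; ring
    · simp [h]
  have hq0 : ∀ a : Fin n, q a a = 0 := by
    intro a
    rw [hqval]
    refine Finset.sum_eq_zero fun S _ => ?_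
    simp [Finset.mem_erase]
  have hB : ∀ a b : Fin n, a ≠ b →
      (∑ S : Finset (Fin n), if a ∈ S ∧ b ∈ S then μ S * ∏ i ∈ S, z i else 0)
      = z a * z b * q a b := by
    intro a b hab
    rw [hqval, Finset.mul_sum]
    refine Finset.sum_congr rfl fun S _ => ?_
    by_cases hbS : b ∈ S
    · by_cases haS : a ∈ S
      · have haE : a ∈ S.erase b := Finset.mem_erase.2 ⟨hab, haS⟩
        simp only [if_pos hbS, if_pos haE, if_pos (⟨haS, hbS⟩ : a ∈ S ∧ b ∈ S)]
        rw [← Finset.mul_prod_erase S z hbS, ← Finset.mul_prod_erase (S.erase b) z haE]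
        ring
      · have hne : a ∉ S.erase b := fun h => haS (Finset.mem_erase.1 h).2
        simp [hbS, haS, hne]
    · simp [hbS]
  -- the entrywise formula
  have part1 : ∀ a b : Fin n,
      fderiv ℝ (fun y => fderiv ℝ (fun w => Real.log (g w)) y (Pi.single b 1)) z
        (Pi.single a 1)
      = (C z a b - (if a = b then m z a else 0)) / (z a * z b) := by
    intro a b
    rw [hmain a b]
    simp only [hC, hm]
    rw [hA a, hA b]
    by_cases hab : a = b
    · subst hab
      rw [hq0 a, if_pos rfl]
      simp only [and_self]
      rw [hA a]
      field_simp [hzne a]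
      ring
    · rw [if_neg hab, hB a b hab]
      field_simp [hzne a, hzne b]
      ring
  refine ⟨part1, ?_⟩
  -- matrix part
  set M : Matrix (Fin n) (Fin n) ℝ := Matrix.of (fun a b : Fin n =>
    (if a = b then m z a else 0) - C z a b) with hM
  set N : Matrix (Fin n) (Fin n) ℝ := Matrix.of (fun a b : Fin n =>
    - fderiv ℝ (fun y => fderiv ℝ (fun w => Real.log (g w)) y (Pi.single b 1)) z
        (Pi.single a 1)) with hN
  have hNent : ∀ a b, N a b = (z a)⁻¹ * M a b * (z b)⁻¹ := by
    intro a b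
    rw [hN, hM]
    simp only [Matrix.of_apply]
    rw [part1 a b]
    field_simp [hzne a, hzne b]
    try ring
  set D : Matrix (Fin n) (Fin n) ℝ := Matrix.diagonal (fun i => (z i)⁻¹) with hD
  set E : Matrix (Fin n) (Fin n) ℝ := Matrix.diagonal z with hE
  have hDH : D.conjTranspose = D := by
    rw [hD, Matrix.diagonal_conjTranspose]
    simp
  have hEH : E.conjTranspose = E := by
    rw [hE, Matrix.diagonal_conjTranspose]
    simp
  have hNM : N = D * M * D.conjTranspose := by
    rw [hDH]
    ext a b
    rw [hNent a b]
    simp only [hD, Matrix.mul_apply, Matrix.diagonal_apply, Matrix.of_apply, ite_mul, mul_ite,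
      zero_mul, mul_zero, Finset.sum_ite_eq, Finset.sum_ite_eq', Finset.mem_univ, if_true]
    try ring
  have hMN : M = E * N * E.conjTranspose := by
    rw [hEH]
    ext a b
    simp only [hE, Matrix.mul_apply, Matrix.diagonal_apply, Matrix.of_apply, ite_mul, mul_ite,
      zero_mul, mul_zero, Finset.sum_ite_eq, Finset.sum_ite_eq', Finset.mem_univ, if_true,
      hNent a b]
    field_simp [hzne a, hzne b]
    try ring
  constructor
  · intro hNps
    rw [hMN]
    exact hNps.mul_mul_conjTranspose_same E
  · intro hMps
    rw [hNM]
    exact hMps.mul_mul_conjTranspose_same D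
end

section
/- Let μ be a distribution fully supported on a downward closed family X ⊆ {0,1}^n, and fix a non-maximal S ∈ X. As λ → 0⁺, the following asymptotic expansion holds: Cov(λ*μ^S) - diag(m(λ*μ^S)) = λ²·diag(r_S)(M_S - I)diag(r_S) + o(λ²), and m(λ*μ^S)_i = λ·r_S(i) + o(λ) for i ∈ V_S. Consequently, if M_S ⪯ I + (1-δ)diag(r_S)^{-1}, then for sufficiently small λ > 0, Cov(λ*μ^S) ⪯ (1 + (1-δ)λ + o(λ))·diag(m(λ*μ^S)). -/
open Topology Asymptotics Matrix

lemma aux_sum_bound {n : ℕ} (S : Finset (Fin n)) (g : Finset (Fin n) → ℝ)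
    (P : Finset (Fin n) → Prop) [DecidablePred P] (k : ℕ)
    (hP : ∀ T ∈ Sᶜ.powerset, P T → k ≤ T.card) {l : ℝ} (h0 : 0 ≤ l) (h1 : l ≤ 1) :
    |∑ T ∈ Sᶜ.powerset, if P T then g T * l ^ T.card else 0|
      ≤ (∑ T ∈ Sᶜ.powerset, |g T|) * l ^ k := by
  rw [Finset.sum_mul]
  calc |∑ T ∈ Sᶜ.powerset, if P T then g T * l ^ T.card else 0|
      ≤ ∑ T ∈ Sᶜ.powerset, |if P T then g T * l ^ T.card else 0| :=
        Finset.abs_sum_le_sum_abs _ _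
    _ ≤ ∑ T ∈ Sᶜ.powerset, |g T| * l ^ k := by
        refine Finset.sum_le_sum fun T hT => ?_
        by_cases h : P T
        · simp only [h, if_true, abs_mul, abs_pow, abs_of_nonneg h0]
          exact mul_le_mul_of_nonneg_left
            (pow_le_pow_of_le_one h0 h1 (hP T hT h)) (abs_nonneg _)
        · simp only [h, if_false, abs_zero]
          positivity

lemma aux_split {α : Type*} [DecidableEq α] (s : Finset α) (f : α → ℝ) (Q : α → Prop)
    [DecidablePred Q] (a : α) (ha : a ∈ s) (hQa : Q a) :
    ∑ T ∈ s, (if Q T then f T else 0)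
      = f a + ∑ T ∈ s, (if Q T ∧ T ≠ a then f T else 0) := by
  have h : ∀ T ∈ s, (if Q T then f T else 0)
      = (if T = a then f T else 0) + (if Q T ∧ T ≠ a then f T else 0) := by
    intro T _
    by_cases h1 : T = a
    · subst h1; simp [hQa]
    · by_cases h2 : Q T <;> simp [h1, h2]
  rw [Finset.sum_congr rfl h, Finset.sum_add_distrib, Finset.sum_ite_eq' s a f, if_pos ha]

lemma aux_split' {α : Type*} [DecidableEq α] (s : Finset α) (f : α → ℝ)
    (a : α) (ha : a ∈ s) :
    ∑ T ∈ s, f T = f a + ∑ T ∈ s, (if T ≠ a then f T else 0) := by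
  have := aux_split s f (fun _ => True) a ha trivial
  simpa using this

lemma aux_littleO {f : ℝ → ℝ} {C : ℝ} {k : ℕ}
    (h : ∀ᶠ l in 𝓝[>](0:ℝ), |f l| ≤ C * l^(k+1)) :
    f =o[𝓝[>](0:ℝ)] fun l => l^k := by
  have hbig : f =O[𝓝[>](0:ℝ)] fun l => l^(k+1) := by
    rw [Asymptotics.isBigO_iff]
    refine ⟨C, ?_⟩
    filter_upwards [h, self_mem_nhdsWithin] with l hl hl0
    rw [Real.norm_eq_abs, Real.norm_eq_abs, abs_pow, abs_of_pos (show (0:ℝ) < l from hl0)]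
    exact hl
  refine hbig.trans_isLittleO ?_
  have h1 : (fun l : ℝ => l) =o[𝓝[>](0:ℝ)] (fun _ => (1:ℝ)) := by
    rw [Asymptotics.isLittleO_one_iff]
    exact Filter.Tendsto.mono_left Filter.tendsto_id nhdsWithin_le_nhds
  have := h1.mul_isBigO (Asymptotics.isBigO_refl (fun l : ℝ => l^k) (𝓝[>](0:ℝ)))
  simpa [pow_succ, mul_comm] using this

set_option maxHeartbeats 2000000 in
/-- Small-fugacity expansion: for a distribution `μ` fully supported on a downward closed
family `X` and a non-maximal `S ∈ X`, as `λ → 0⁺`,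
`m(λ*μ^S)_i = λ·r_S(i) + o(λ)` and
`Cov(λ*μ^S) - diag(m(λ*μ^S)) = λ²·diag(r_S)(M_S - I)diag(r_S) + o(λ²)` entrywise on `V_S`;
consequently, if `M_S ⪯ I + (1-δ)·diag(r_S)⁻¹`, then for sufficiently small `λ > 0`,
`Cov(λ*μ^S) ⪯ (1 + (1-δ)λ + o(λ))·diag(m(λ*μ^S))`. -/
theorem stmt17 {n : ℕ} (X : Finset (Finset (Fin n))) (hX : X.Nonempty)
    (hdc : ∀ S T : Finset (Fin n), T ∈ X → S ⊆ T → S ∈ X)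
    (μ : Finset (Fin n) → ℝ)
    (hsupp : ∀ S, 0 < μ S ↔ S ∈ X) (hzero : ∀ S, S ∉ X → μ S = 0)
    (S : Finset (Fin n)) (hS : S ∈ X) (hnonmax : ∃ i ∉ S, insert i S ∈ X)
    (Z : ℝ → ℝ) (hZ : Z = fun l => ∑ T ∈ Sᶜ.powerset, μ (S ∪ T) * l ^ T.card)
    (m : ℝ → Fin n → ℝ)
    (hm : m = fun l i =>
      (∑ T ∈ Sᶜ.powerset, (if i ∈ T then μ (S ∪ T) * l ^ T.card else 0)) / Z l)
    (Cov : ℝ → Fin n → Fin n → ℝ)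
    (hCov : Cov = fun l i j =>
      (∑ T ∈ Sᶜ.powerset, (if i ∈ T ∧ j ∈ T then μ (S ∪ T) * l ^ T.card else 0)) / Z l
        - m l i * m l j)
    (r : Fin n → ℝ) (hr : r = fun i => μ (insert i S) / μ S)
    (M : Fin n → Fin n → ℝ)
    (hM : M = fun i j => if i = j then 0
      else μ (insert i (insert j S)) * μ S / (μ (insert i S) * μ (insert j S)) - 1)
    (δ : ℝ) (hδ : δ ∈ Set.Icc (0 : ℝ) 1) :
    (∀ i : {a : Fin n // a ∉ S ∧ insert a S ∈ X},
      (fun l : ℝ => m l i.1 - l * r i.1) =o[𝓝[>] (0 : ℝ)] fun l => l) ∧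
    (∀ i j : {a : Fin n // a ∉ S ∧ insert a S ∈ X},
      (fun l : ℝ => Cov l i.1 j.1 - (if i = j then m l i.1 else 0)
          - l ^ 2 * (r i.1 * (M i.1 j.1 - (if i = j then 1 else 0)) * r j.1))
        =o[𝓝[>] (0 : ℝ)] fun l => l ^ 2) ∧
    ((Matrix.of (fun i j : {a : Fin n // a ∉ S ∧ insert a S ∈ X} =>
        (if i = j then 1 + (1 - δ) / r i.1 else 0) - M i.1 j.1)).PosSemidef →
      ∃ e : ℝ → ℝ, (e =o[𝓝[>] (0 : ℝ)] fun l => l) ∧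
        ∀ᶠ l in 𝓝[>] (0 : ℝ),
          (Matrix.of (fun i j : {a : Fin n // a ∉ S ∧ insert a S ∈ X} =>
            (1 + (1 - δ) * l + e l) * (if i = j then m l i.1 else 0)
              - Cov l i.1 j.1)).PosSemidef) := by
  classical
  set V := {a : Fin n // a ∉ S ∧ insert a S ∈ X}
  have hs : 0 < μ S := (hsupp S).2 hS
  have hμnn : ∀ T, 0 ≤ μ T := by
    intro T
    by_cases h : T ∈ X
    · exact le_of_lt ((hsupp T).2 h)
    · exact le_of_eq (hzero T h).symm
  have hrpos : ∀ i : V, 0 < r i.1 := by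
    intro i
    rw [hr]
    exact div_pos ((hsupp _).2 i.2.2) hs
  set C₀ : ℝ := ∑ T ∈ Sᶜ.powerset, |μ (S ∪ T)| with hC₀def
  have hC₀ : 0 ≤ C₀ := Finset.sum_nonneg fun T _ => abs_nonneg _
  -- Z split
  set B : ℝ → ℝ := fun l => ∑ T ∈ Sᶜ.powerset, (if T ≠ ∅ then μ (S ∪ T) * l ^ T.card else 0)
    with hBdef
  have hZB : ∀ l, Z l = μ S + B l := by
    intro l
    rw [hZ, hBdef]
    simpa [Finset.union_empty] using
      aux_split' Sᶜ.powerset (fun T => μ (S ∪ T) * l ^ T.card) ∅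
        (Finset.empty_mem_powerset _)
  have hBbd : ∀ l : ℝ, 0 ≤ l → l ≤ 1 → |B l| ≤ C₀ * l ^ 1 := by
    intro l h0 h1
    rw [hBdef, hC₀def]
    refine aux_sum_bound S (fun T => μ (S ∪ T)) (fun T => T ≠ ∅) 1 ?_ h0 h1
    intro T _ hT
    exact Finset.card_pos.2 (Finset.nonempty_iff_ne_empty.2 hT)
  -- eventual facts
  have hZc : Continuous Z := by
    rw [hZ]; fun_prop
  have hZ0 : Z 0 = μ S := by
    have hB0 : B 0 = 0 := by
      have := hBbd 0 le_rfl zero_le_one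
      simp at this
      exact this
    rw [hZB 0, hB0, add_zero]
  have hev : ∀ᶠ l in 𝓝[>] (0:ℝ), 0 < l ∧ l ≤ 1 ∧ μ S / 2 < Z l := by
    have h1 : ∀ᶠ l in 𝓝[>] (0:ℝ), l ≤ 1 := by
      refine Filter.Eventually.filter_mono nhdsWithin_le_nhds ?_
      exact (eventually_lt_nhds zero_lt_one).mono fun l h => h.le
    have h2 : ∀ᶠ l in 𝓝[>] (0:ℝ), μ S / 2 < Z l := by
      refine Filter.Eventually.filter_mono nhdsWithin_le_nhds ?_
      have ht : Filter.Tendsto Z (𝓝 0) (𝓝 (μ S)) := by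
        have := hZc.continuousAt (x := (0:ℝ))
        rwa [ContinuousAt, hZ0] at this
      exact ht.eventually (eventually_gt_nhds (by linarith))
    filter_upwards [self_mem_nhdsWithin, h1, h2] with l ha hb hc
    exact ⟨ha, hb, hc⟩
  -- first order bound
  set Cw : V → ℝ := fun i => 2 * (1 + r i.1) * C₀ / μ S with hCwdef
  have hCwnn : ∀ i : V, 0 ≤ Cw i := by
    intro i
    rw [hCwdef]
    have := (hrpos i).le
    positivity
  have hW : ∀ i : V, ∀ l : ℝ, 0 < l → l ≤ 1 → μ S / 2 < Z l →
      |m l i.1 - l * r i.1| ≤ Cw i * l ^ 2 := by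
    intro i l h0 h1 hZl
    have hiS : i.1 ∉ S := i.2.1
    have hsingle : ({i.1} : Finset (Fin n)) ∈ Sᶜ.powerset := by
      simp [Finset.mem_powerset, Finset.singleton_subset_iff, Finset.mem_compl, hiS]
    have hunion : S ∪ {i.1} = insert i.1 S := by
      rw [Finset.union_comm, ← Finset.insert_eq]
    set A : ℝ := ∑ T ∈ Sᶜ.powerset,
      (if i.1 ∈ T ∧ T ≠ ({i.1} : Finset (Fin n)) then μ (S ∪ T) * l ^ T.card else 0)
      with hAdef
    have hNsplit : (∑ T ∈ Sᶜ.powerset, (if i.1 ∈ T then μ (S ∪ T) * l ^ T.card else 0))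
        = μ (insert i.1 S) * l + A := by
      have := aux_split Sᶜ.powerset (fun T => μ (S ∪ T) * l ^ T.card)
        (fun T => i.1 ∈ T) {i.1} hsingle (Finset.mem_singleton_self _)
      simpa [hunion] using this
    have hAbd : |A| ≤ C₀ * l ^ 2 := by
      rw [hAdef, hC₀def]
      refine aux_sum_bound S (fun T => μ (S ∪ T)) _ 2 ?_ h0.le h1
      intro T _ hT
      have hsub : ({i.1} : Finset (Fin n)) ⊂ T :=
        (Finset.singleton_subset_iff.2 hT.1).ssubset_of_ne (Ne.symm hT.2)
      have := Finset.card_lt_card hsub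
      simp only [Finset.card_singleton] at this; omega
    have hZpos : 0 < Z l := lt_trans (by linarith) hZl
    have hZne : Z l ≠ 0 := ne_of_gt hZpos
    have hBne : μ S + B l ≠ 0 := by rw [← hZB]; exact hZne
    have key : m l i.1 - l * r i.1 = (A - l * r i.1 * B l) / Z l := by
      rw [hm, hr]
      simp only
      rw [hNsplit, hZB l]
      field_simp
      ring
    have hBl : |B l| ≤ C₀ * l ^ 1 := hBbd l h0.le h1
    have hnum : |A - l * r i.1 * B l| ≤ C₀ * l ^ 2 + l * r i.1 * (C₀ * l ^ 1) := by
      have h2 : |l * r i.1 * B l| ≤ l * r i.1 * (C₀ * l ^ 1) := by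
        rw [abs_mul, abs_of_nonneg (mul_nonneg h0.le (hrpos i).le)]
        exact mul_le_mul_of_nonneg_left hBl (mul_nonneg h0.le (hrpos i).le)
      calc |A - l * r i.1 * B l| ≤ |A| + |l * r i.1 * B l| := by
            rw [sub_eq_add_neg]
            exact (abs_add_le _ _).trans (by rw [abs_neg])
        _ ≤ C₀ * l ^ 2 + l * r i.1 * (C₀ * l ^ 1) := add_le_add hAbd h2
    calc |m l i.1 - l * r i.1| = |A - l * r i.1 * B l| / Z l := by
          rw [key, abs_div, abs_of_pos hZpos]
      _ ≤ (C₀ * l ^ 2 + l * r i.1 * (C₀ * l ^ 1)) / (μ S / 2) :=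
          div_le_div₀ (add_nonneg (by positivity)
            (mul_nonneg (mul_nonneg h0.le (hrpos i).le) (by positivity)))
            hnum (by positivity) hZl.le
      _ = Cw i * l ^ 2 := by
          rw [hCwdef]
          field_simp
  -- second order bound
  set Ce : V → V → ℝ := fun i j =>
    if i = j then Cw i * (Cw i + 2 * r i.1)
    else 2 * (1 + μ (insert i.1 (insert j.1 S)) / μ S) * C₀ / μ S
      + (Cw i * (r j.1 + Cw j) + r i.1 * Cw j) with hCedef
  have hCenn : ∀ i j : V, 0 ≤ Ce i j := by
    intro i j
    have h1 := hCwnn i; have h2 := hCwnn j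
    have h3 := (hrpos i).le; have h4 := (hrpos j).le
    have h5 := hμnn (insert i.1 (insert j.1 S))
    simp only [hCedef]
    split_ifs with h
    · exact mul_nonneg h1 (by linarith)
    · have h6 : (0:ℝ) ≤ μ (insert i.1 (insert j.1 S)) / μ S := div_nonneg h5 hs.le
      refine add_nonneg (div_nonneg (mul_nonneg (mul_nonneg (by norm_num)
        (by linarith)) hC₀) hs.le) ?_
      exact add_nonneg (mul_nonneg h1 (add_nonneg h4 h2)) (mul_nonneg h3 h2)
  have hE : ∀ i j : V, ∀ l : ℝ, 0 < l → l ≤ 1 → μ S / 2 < Z l →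
      |Cov l i.1 j.1 - (if i = j then m l i.1 else 0)
          - l ^ 2 * (r i.1 * (M i.1 j.1 - (if i = j then 1 else 0)) * r j.1)|
        ≤ Ce i j * l ^ 3 := by
    intro i j l h0 h1 hZl
    have hZpos : 0 < Z l := lt_trans (by linarith) hZl
    have hZne : Z l ≠ 0 := ne_of_gt hZpos
    have hBne : μ S + B l ≠ 0 := by rw [← hZB]; exact hZne
    have hBl : |B l| ≤ C₀ * l ^ 1 := hBbd l h0.le h1
    have hwi := hW i l h0 h1 hZl
    have hwj := hW j l h0 h1 hZl
    by_cases hij : i = j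
    · subst hij
      have hMii : M i.1 i.1 = 0 := by rw [hM]; simp
      have hCovii : Cov l i.1 i.1 = m l i.1 - m l i.1 * m l i.1 := by
        rw [hCov, hm]
        simp
      have hkey : Cov l i.1 i.1 - (if i = i then m l i.1 else 0)
          - l ^ 2 * (r i.1 * (M i.1 i.1 - (if i = i then 1 else 0)) * r i.1)
          = -((m l i.1 - l * r i.1) * (m l i.1 + l * r i.1)) := by
        rw [hCovii, hMii]
        split_ifs with h
        · ring
        · exact absurd rfl h
      have h2 : |m l i.1 + l * r i.1| ≤ Cw i * l ^ 2 + 2 * (l * r i.1) := by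
        calc |m l i.1 + l * r i.1| = |(m l i.1 - l * r i.1) + 2 * (l * r i.1)| := by
              ring_nf
          _ ≤ |m l i.1 - l * r i.1| + |2 * (l * r i.1)| := abs_add_le _ _
          _ ≤ Cw i * l ^ 2 + 2 * (l * r i.1) := by
              refine add_le_add hwi ?_
              rw [abs_of_nonneg (by
                have := (hrpos i).le
                have := h0.le
                nlinarith : (0:ℝ) ≤ 2 * (l * r i.1))]
      rw [hkey, abs_neg, abs_mul]
      have hprod : |m l i.1 - l * r i.1| * |m l i.1 + l * r i.1|
          ≤ (Cw i * l ^ 2) * (Cw i * l ^ 2 + 2 * (l * r i.1)) :=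
        mul_le_mul hwi h2 (abs_nonneg _)
          (mul_nonneg (hCwnn i) (by positivity))
      refine hprod.trans ?_
      have hl4 : l ^ 4 ≤ l ^ 3 := pow_le_pow_of_le_one h0.le h1 (by norm_num)
      have hCeii : Ce i i = Cw i * (Cw i + 2 * r i.1) := by simp [hCedef]
      rw [hCeii]
      nlinarith [hCwnn i, (hrpos i).le, pow_pos h0 3, pow_pos h0 2, sq_nonneg (Cw i)]
    · have hij1 : i.1 ≠ j.1 := fun h => hij (Subtype.ext h)
      have hμi : 0 < μ (insert i.1 S) := (hsupp _).2 i.2.2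
      have hμj : 0 < μ (insert j.1 S) := (hsupp _).2 j.2.2
      have hμ2 : 0 ≤ μ (insert i.1 (insert j.1 S)) := hμnn _
      have hpair : ({i.1, j.1} : Finset (Fin n)) ∈ Sᶜ.powerset := by
        simp [Finset.insert_subset_iff, Finset.mem_compl, i.2.1, j.2.1]
      have huni : S ∪ ({i.1, j.1} : Finset (Fin n)) = insert i.1 (insert j.1 S) := by
        ext x; simp
      have hcard2 : ({i.1, j.1} : Finset (Fin n)).card = 2 := by
        rw [Finset.card_insert_of_notMem (by simp [hij1]), Finset.card_singleton]
      set A2 : ℝ := ∑ T ∈ Sᶜ.powerset,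
        (if (i.1 ∈ T ∧ j.1 ∈ T) ∧ T ≠ ({i.1, j.1} : Finset (Fin n))
          then μ (S ∪ T) * l ^ T.card else 0) with hA2def
      have hPsplit : (∑ T ∈ Sᶜ.powerset,
            (if i.1 ∈ T ∧ j.1 ∈ T then μ (S ∪ T) * l ^ T.card else 0))
          = μ (insert i.1 (insert j.1 S)) * l ^ 2 + A2 := by
        have := aux_split Sᶜ.powerset (fun T => μ (S ∪ T) * l ^ T.card)
          (fun T => i.1 ∈ T ∧ j.1 ∈ T) {i.1, j.1} hpair
          ⟨by simp, by simp⟩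
        simpa [huni, hcard2] using this
      have hA2bd : |A2| ≤ C₀ * l ^ 3 := by
        rw [hA2def, hC₀def]
        refine aux_sum_bound S (fun T => μ (S ∪ T)) _ 3 ?_ h0.le h1
        intro T _ hT
        have hsub : ({i.1, j.1} : Finset (Fin n)) ⊂ T := by
          refine (Finset.insert_subset_iff.2 ⟨hT.1.1, Finset.singleton_subset_iff.2 hT.1.2⟩).ssubset_of_ne (Ne.symm hT.2)
        have := Finset.card_lt_card hsub
        omega
      have hMr : r i.1 * (M i.1 j.1 - (0:ℝ)) * r j.1
          = μ (insert i.1 (insert j.1 S)) / μ S - r i.1 * r j.1 := by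
        rw [hM, hr]
        simp only [if_neg hij1]
        field_simp
        ring
      have key2 : Cov l i.1 j.1 - (0:ℝ)
            - l ^ 2 * (μ (insert i.1 (insert j.1 S)) / μ S - r i.1 * r j.1)
          = (A2 - l ^ 2 * μ (insert i.1 (insert j.1 S)) * B l / μ S) / Z l
            - ((m l i.1 - l * r i.1) * (m l j.1)
              + l * r i.1 * (m l j.1 - l * r j.1)) := by
        rw [hCov]
        simp only
        rw [hPsplit, hZB l]
        field_simp
        ring
      have hmj : |m l j.1| ≤ (r j.1 + Cw j) * l := by
        have hl2 : l ^ 2 ≤ l := by nlinarith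
        calc |m l j.1| = |(m l j.1 - l * r j.1) + l * r j.1| := by ring_nf
          _ ≤ |m l j.1 - l * r j.1| + |l * r j.1| := abs_add_le _ _
          _ ≤ Cw j * l ^ 2 + l * r j.1 := by
              refine add_le_add hwj ?_
              rw [abs_of_nonneg (mul_nonneg h0.le (hrpos j).le)]
          _ ≤ (r j.1 + Cw j) * l := by
              have := hCwnn j
              nlinarith
      have ha1 : |(A2 - l ^ 2 * μ (insert i.1 (insert j.1 S)) * B l / μ S) / Z l|
          ≤ (C₀ * l ^ 3 + l ^ 2 * μ (insert i.1 (insert j.1 S)) * (C₀ * l) / μ S)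
            / (μ S / 2) := by
        rw [abs_div, abs_of_pos hZpos]
        refine div_le_div₀ ?_ ?_ (by positivity) hZl.le
        · have : (0:ℝ) ≤ l ^ 2 * μ (insert i.1 (insert j.1 S)) * (C₀ * l) / μ S := by
            positivity
          positivity
        · calc |A2 - l ^ 2 * μ (insert i.1 (insert j.1 S)) * B l / μ S|
              ≤ |A2| + |l ^ 2 * μ (insert i.1 (insert j.1 S)) * B l / μ S| := by
                rw [sub_eq_add_neg]
                exact (abs_add_le _ _).trans (by rw [abs_neg])
            _ ≤ C₀ * l ^ 3 + l ^ 2 * μ (insert i.1 (insert j.1 S)) * (C₀ * l) / μ S := by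
                refine add_le_add hA2bd ?_
                rw [abs_div, abs_of_pos hs, abs_mul, abs_mul, abs_pow,
                  abs_of_pos h0, abs_of_nonneg hμ2]
                have hBl' : |B l| ≤ C₀ * l := by simpa using hBl
                exact div_le_div₀
                  (mul_nonneg (mul_nonneg (by positivity) hμ2) (by positivity))
                  (mul_le_mul_of_nonneg_left hBl'
                    (mul_nonneg (by positivity) hμ2)) hs le_rfl
      have ha2 : |(m l i.1 - l * r i.1) * (m l j.1)|
          ≤ (Cw i * l ^ 2) * ((r j.1 + Cw j) * l) := by
        rw [abs_mul]
        exact mul_le_mul hwi hmj (abs_nonneg _)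
          (mul_nonneg (hCwnn i) (by positivity))
      have ha3 : |l * r i.1 * (m l j.1 - l * r j.1)|
          ≤ l * r i.1 * (Cw j * l ^ 2) := by
        rw [abs_mul, abs_of_nonneg (mul_nonneg h0.le (hrpos i).le)]
        exact mul_le_mul_of_nonneg_left hwj (mul_nonneg h0.le (hrpos i).le)
      have htotal : (C₀ * l ^ 3 + l ^ 2 * μ (insert i.1 (insert j.1 S)) * (C₀ * l) / μ S)
            / (μ S / 2)
          + ((Cw i * l ^ 2) * ((r j.1 + Cw j) * l) + l * r i.1 * (Cw j * l ^ 2))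
          = Ce i j * l ^ 3 := by
        simp only [hCedef, if_neg hij]
        field_simp
      simp only [if_neg hij]
      have hgoal : Cov l i.1 j.1 - (0:ℝ)
            - l ^ 2 * (r i.1 * (M i.1 j.1 - 0) * r j.1)
          = (A2 - l ^ 2 * μ (insert i.1 (insert j.1 S)) * B l / μ S) / Z l
            - ((m l i.1 - l * r i.1) * (m l j.1)
              + l * r i.1 * (m l j.1 - l * r j.1)) := by
        rw [hMr]; exact key2
      rw [hgoal]
      calc |(A2 - l ^ 2 * μ (insert i.1 (insert j.1 S)) * B l / μ S) / Z l
            - ((m l i.1 - l * r i.1) * (m l j.1)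
              + l * r i.1 * (m l j.1 - l * r j.1))|
          ≤ |(A2 - l ^ 2 * μ (insert i.1 (insert j.1 S)) * B l / μ S) / Z l|
            + (|(m l i.1 - l * r i.1) * (m l j.1)|
              + |l * r i.1 * (m l j.1 - l * r j.1)|) := by
            rw [sub_eq_add_neg]
            refine (abs_add_le _ _).trans ?_
            rw [abs_neg]
            exact add_le_add le_rfl (abs_add_le _ _)
        _ ≤ (C₀ * l ^ 3 + l ^ 2 * μ (insert i.1 (insert j.1 S)) * (C₀ * l) / μ S)
              / (μ S / 2)
            + ((Cw i * l ^ 2) * ((r j.1 + Cw j) * l) + l * r i.1 * (Cw j * l ^ 2)) :=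
            add_le_add ha1 (add_le_add ha2 ha3)
        _ = Ce i j * l ^ 3 := htotal
  have part1 : ∀ i : V,
      (fun l : ℝ => m l i.1 - l * r i.1) =o[𝓝[>] (0 : ℝ)] fun l : ℝ => l := by
    intro i
    have h := aux_littleO (f := fun l => m l i.1 - l * r i.1) (C := Cw i) (k := 1)
      (by filter_upwards [hev] with l ⟨h0, h1, h2⟩; exact hW i l h0 h1 h2)
    simpa using h
  have part2 : ∀ i j : V,
      (fun l : ℝ => Cov l i.1 j.1 - (if i = j then m l i.1 else 0)
          - l ^ 2 * (r i.1 * (M i.1 j.1 - (if i = j then 1 else 0)) * r j.1))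
        =o[𝓝[>] (0 : ℝ)] fun l : ℝ => l ^ 2 := by
    intro i j
    exact aux_littleO (C := Ce i j) (k := 2)
      (by filter_upwards [hev] with l ⟨h0, h1, h2⟩; exact hE i j l h0 h1 h2)
  refine ⟨part1, part2, ?_⟩
  intro hH
  -- setup for part 3
  have hVne : Nonempty V := by
    obtain ⟨i0, hi0, hi0'⟩ := hnonmax
    exact ⟨⟨i0, hi0, hi0'⟩⟩
  have huniv : (Finset.univ : Finset V).Nonempty := Finset.univ_nonempty
  set ρ : ℝ := Finset.univ.inf' huniv (fun i : V => r i.1) with hρdef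
  have hρle : ∀ i : V, ρ ≤ r i.1 := fun i => Finset.inf'_le _ (Finset.mem_univ i)
  have hρpos : 0 < ρ := by
    rw [hρdef, Finset.lt_inf'_iff]
    exact fun i _ => hrpos i
  set Ctot : ℝ := ∑ i : V, ∑ j : V, (Ce i j + 2 * Cw i) with hCtotdef
  have hterm_nn : ∀ i j : V, 0 ≤ Ce i j + 2 * Cw i := by
    intro i j
    have := hCenn i j; have := hCwnn i
    linarith
  have hCtotnn : 0 ≤ Ctot :=
    Finset.sum_nonneg fun i _ => Finset.sum_nonneg fun j _ => hterm_nn i j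
  have hterm_le : ∀ i j : V, Ce i j + 2 * Cw i ≤ Ctot := by
    intro i j
    rw [hCtotdef]
    calc Ce i j + 2 * Cw i ≤ ∑ j' : V, (Ce i j' + 2 * Cw i) :=
          Finset.single_le_sum (fun j' _ => hterm_nn i j') (Finset.mem_univ j)
      _ ≤ ∑ i' : V, ∑ j' : V, (Ce i' j' + 2 * Cw i') :=
          Finset.single_le_sum
            (fun i' _ => Finset.sum_nonneg fun j' _ => hterm_nn i' j')
            (Finset.mem_univ i)
  refine ⟨fun l => l * Real.sqrt l, ?_, ?_⟩
  · -- e = o(l)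
    have h1 : (fun l : ℝ => Real.sqrt l) =o[𝓝[>] (0:ℝ)] (fun _ => (1:ℝ)) := by
      rw [Asymptotics.isLittleO_one_iff]
      have : Filter.Tendsto Real.sqrt (𝓝 (0:ℝ)) (𝓝 (0:ℝ)) := by
        simpa [Real.sqrt_zero] using
          (Real.continuous_sqrt.tendsto (0:ℝ))
      exact this.mono_left nhdsWithin_le_nhds
    have := (Asymptotics.isBigO_refl (fun l : ℝ => l) (𝓝[>] (0:ℝ))).mul_isLittleO h1
    simpa using this
  · -- eventually PSD
    have hsmall : ∀ᶠ l in 𝓝[>] (0:ℝ), Real.sqrt l * Ctot < ρ := by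
      have hsq : Filter.Tendsto (fun l : ℝ => Real.sqrt l * Ctot) (𝓝 (0:ℝ))
          (𝓝 (0:ℝ)) := by
        have : Filter.Tendsto Real.sqrt (𝓝 (0:ℝ)) (𝓝 (0:ℝ)) := by
          simpa [Real.sqrt_zero] using (Real.continuous_sqrt.tendsto (0:ℝ))
        simpa using this.mul_const Ctot
      exact (hsq.eventually (eventually_lt_nhds hρpos)).filter_mono nhdsWithin_le_nhds
    filter_upwards [hev, hsmall] with l hl hsm
    obtain ⟨h0, h1, hZl⟩ := hl
    have hsl : (0:ℝ) ≤ Real.sqrt l := Real.sqrt_nonneg l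
    have hsq : Real.sqrt l * Real.sqrt l = l := Real.mul_self_sqrt h0.le
    have hsl1 : Real.sqrt l ≤ 1 := by
      rw [show (1:ℝ) = Real.sqrt 1 by simp]
      exact Real.sqrt_le_sqrt h1
    -- error matrix F
    set Efn : V → V → ℝ := fun i j => Cov l i.1 j.1 - (if i = j then m l i.1 else 0)
      - l ^ 2 * (r i.1 * (M i.1 j.1 - (if i = j then 1 else 0)) * r j.1) with hEfndef
    set F : V → V → ℝ := fun i j => -(Efn i j)
      + (if i = j then ((1 - δ) * l + l * Real.sqrt l) * (m l i.1 - l * r i.1) else 0)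
      with hFdef
    have hEbd : ∀ i j : V, |Efn i j| ≤ Ce i j * l ^ 3 := fun i j => hE i j l h0 h1 hZl
    have hFbd : ∀ i j : V, |F i j| ≤ (Ce i j + 2 * Cw i) * l ^ 3 := by
      intro i j
      have hE1 := hEbd i j
      have hW1 := hW i l h0 h1 hZl
      simp only [hFdef]
      by_cases hij : i = j
      · subst hij
        simp only [if_pos rfl]
        have htri : |-(Efn i i) + ((1 - δ) * l + l * Real.sqrt l) * (m l i.1 - l * r i.1)|
            ≤ |Efn i i| + |((1 - δ) * l + l * Real.sqrt l)| * |m l i.1 - l * r i.1| := by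
          refine (abs_add_le _ _).trans ?_
          rw [abs_neg, abs_mul]
        refine htri.trans ?_
        have hcoef : |((1 - δ) * l + l * Real.sqrt l)| ≤ 2 * l := by
          rw [abs_of_nonneg]
          · nlinarith [hδ.1, hδ.2]
          · nlinarith [hδ.1, hδ.2]
        have h2 : |((1 - δ) * l + l * Real.sqrt l)| * |m l i.1 - l * r i.1|
            ≤ (2 * l) * (Cw i * l ^ 2) :=
          mul_le_mul hcoef hW1 (abs_nonneg _) (by positivity)
        nlinarith [hE1]
      · simp only [if_neg hij, add_zero, abs_neg]
        have := hCwnn i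
        nlinarith [hE1, pow_pos h0 3]
    -- entrywise decomposition
    have hdec : ∀ i j : V,
        (1 + (1 - δ) * l + l * Real.sqrt l) * (if i = j then m l i.1 else 0)
            - Cov l i.1 j.1
          = l ^ 2 * (r i.1 * ((if i = j then 1 + (1 - δ) / r i.1 else 0) - M i.1 j.1)
              * r j.1)
            + l ^ 2 * Real.sqrt l * (if i = j then r i.1 else 0) + F i j := by
      intro i j
      simp only [hFdef, hEfndef]
      by_cases hij : i = j
      · subst hij
        simp only [eq_self_iff_true, if_true]
        have hrne : r i.1 ≠ 0 := (hrpos i).ne'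
        field_simp
        ring
      · simp only [if_neg hij]
        ring
    rw [Matrix.posSemidef_iff_dotProduct_mulVec]
    constructor
    · -- Hermitian
      have hCovsym : ∀ a b : Fin n, Cov l a b = Cov l b a := by
        intro a b
        rw [hCov]
        simp only
        rw [mul_comm (m l a) (m l b)]
        congr 1
        congr 1
        refine Finset.sum_congr rfl fun T _ => ?_
        exact if_congr and_comm rfl rfl
      refine Matrix.ext fun i j => ?_
      simp only [Matrix.conjTranspose_apply, Matrix.of_apply, star_trivial]
      by_cases hij : i = j
      · subst hij; rfl
      · simp only [if_neg hij, if_neg (Ne.symm hij)]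
        rw [hCovsym]
    · -- quadratic form
      intro x
      have hstar : star x = x := by
        funext i; simp
      rw [hstar]
      have hexpand : dotProduct x ((Matrix.of fun i j : V =>
            (1 + (1 - δ) * l + l * Real.sqrt l) * (if i = j then m l i.1 else 0)
              - Cov l i.1 j.1) *ᵥ x)
          = ∑ i : V, ∑ j : V, x i *
              ((1 + (1 - δ) * l + l * Real.sqrt l) * (if i = j then m l i.1 else 0)
                - Cov l i.1 j.1) * x j := by
        simp only [dotProduct, Matrix.mulVec, Matrix.of_apply]
        refine Finset.sum_congr rfl fun i _ => ?_
        rw [Finset.mul_sum]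
        refine Finset.sum_congr rfl fun j _ => ?_
        ring
      rw [hexpand]
      set Q : ℝ := ∑ i : V, x i ^ 2 with hQdef
      have hQ0 : 0 ≤ Q := Finset.sum_nonneg fun i _ => sq_nonneg _
      have hxQ : ∀ i : V, x i ^ 2 ≤ Q := fun i =>
        Finset.single_le_sum (fun j _ => sq_nonneg (x j)) (Finset.mem_univ i)
      -- three pieces
      have hsum : ∑ i : V, ∑ j : V, x i *
            ((1 + (1 - δ) * l + l * Real.sqrt l) * (if i = j then m l i.1 else 0)
              - Cov l i.1 j.1) * x j
          = (∑ i : V, ∑ j : V, x i *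
              (l ^ 2 * (r i.1 * ((if i = j then 1 + (1 - δ) / r i.1 else 0) - M i.1 j.1)
                * r j.1)) * x j)
            + (∑ i : V, ∑ j : V, x i *
                (l ^ 2 * Real.sqrt l * (if i = j then r i.1 else 0)) * x j)
            + (∑ i : V, ∑ j : V, x i * F i j * x j) := by
        rw [← Finset.sum_add_distrib, ← Finset.sum_add_distrib]
        refine Finset.sum_congr rfl fun i _ => ?_
        rw [← Finset.sum_add_distrib, ← Finset.sum_add_distrib]
        refine Finset.sum_congr rfl fun j _ => ?_
        rw [hdec i j]
        ring
      rw [hsum]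
      -- piece 1 : PSD
      have hy := (Matrix.posSemidef_iff_dotProduct_mulVec.1 hH).2 (fun i : V => r i.1 * x i)
      have hy' : (0:ℝ) ≤ ∑ i : V, ∑ j : V, (r i.1 * x i) *
          ((if i = j then 1 + (1 - δ) / r i.1 else 0) - M i.1 j.1) * (r j.1 * x j) := by
        refine le_trans hy (le_of_eq ?_)
        simp only [dotProduct, Matrix.mulVec, Matrix.of_apply, star_trivial,
          Pi.star_apply]
        refine Finset.sum_congr rfl fun i _ => ?_
        rw [Finset.mul_sum]
        refine Finset.sum_congr rfl fun j _ => ?_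
        ring
      have hq1 : (0:ℝ) ≤ ∑ i : V, ∑ j : V, x i *
          (l ^ 2 * (r i.1 * ((if i = j then 1 + (1 - δ) / r i.1 else 0) - M i.1 j.1)
            * r j.1)) * x j := by
        have heq : ∑ i : V, ∑ j : V, x i *
            (l ^ 2 * (r i.1 * ((if i = j then 1 + (1 - δ) / r i.1 else 0) - M i.1 j.1)
              * r j.1)) * x j
            = l ^ 2 * ∑ i : V, ∑ j : V, (r i.1 * x i) *
              ((if i = j then 1 + (1 - δ) / r i.1 else 0) - M i.1 j.1) * (r j.1 * x j) := by
          rw [Finset.mul_sum]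
          refine Finset.sum_congr rfl fun i _ => ?_
          rw [Finset.mul_sum]
          refine Finset.sum_congr rfl fun j _ => ?_
          ring
        rw [heq]
        exact mul_nonneg (by positivity) hy'
      -- piece 2 : diagonal lower bound
      have hq2 : (l ^ 2 * Real.sqrt l) * (ρ * Q) ≤ ∑ i : V, ∑ j : V, x i *
          (l ^ 2 * Real.sqrt l * (if i = j then r i.1 else 0)) * x j := by
        have hinner : ∀ i : V, ∑ j : V, x i *
            (l ^ 2 * Real.sqrt l * (if i = j then r i.1 else 0)) * x j
            = (l ^ 2 * Real.sqrt l) * (r i.1 * x i ^ 2) := by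
          intro i
          rw [Finset.sum_eq_single i]
          · split_ifs with h
            · ring
            · exact absurd rfl h
          · intro j _ hji
            simp [Ne.symm hji]
          · intro h; exact absurd (Finset.mem_univ i) h
        have hle : ∀ i : V, (l ^ 2 * Real.sqrt l) * (ρ * x i ^ 2)
            ≤ (l ^ 2 * Real.sqrt l) * (r i.1 * x i ^ 2) := by
          intro i
          exact mul_le_mul_of_nonneg_left
            (mul_le_mul_of_nonneg_right (hρle i) (sq_nonneg (x i))) (by positivity)
        calc (l ^ 2 * Real.sqrt l) * (ρ * Q)
            = ∑ i : V, (l ^ 2 * Real.sqrt l) * (ρ * x i ^ 2) := by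
              simp only [hQdef, Finset.mul_sum]
          _ ≤ ∑ i : V, (l ^ 2 * Real.sqrt l) * (r i.1 * x i ^ 2) :=
              Finset.sum_le_sum fun i _ => hle i
          _ = ∑ i : V, ∑ j : V, x i *
              (l ^ 2 * Real.sqrt l * (if i = j then r i.1 else 0)) * x j :=
              (Finset.sum_congr rfl fun i _ => (hinner i).symm)
      -- piece 3 : error bound
      have hq3 : |∑ i : V, ∑ j : V, x i * F i j * x j| ≤ Ctot * l ^ 3 * Q := by
        have hterm : ∀ i j : V, |x i * F i j * x j| ≤ (Ce i j + 2 * Cw i) * l ^ 3 * Q := by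
          intro i j
          rw [abs_mul, abs_mul]
          have h1 : |x i| * |F i j| * |x j| = |F i j| * (|x i| * |x j|) := by ring
          rw [h1]
          have hxx : |x i| * |x j| ≤ Q := by
            nlinarith [hxQ i, hxQ j, sq_nonneg (|x i| - |x j|), sq_abs (x i),
              sq_abs (x j), abs_nonneg (x i), abs_nonneg (x j)]
          calc |F i j| * (|x i| * |x j|)
              ≤ ((Ce i j + 2 * Cw i) * l ^ 3) * Q :=
                mul_le_mul (hFbd i j) hxx
                  (mul_nonneg (abs_nonneg _) (abs_nonneg _))
                  (mul_nonneg (hterm_nn i j) (by positivity))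
            _ = (Ce i j + 2 * Cw i) * l ^ 3 * Q := by ring
        calc |∑ i : V, ∑ j : V, x i * F i j * x j|
            ≤ ∑ i : V, |∑ j : V, x i * F i j * x j| := Finset.abs_sum_le_sum_abs _ _
          _ ≤ ∑ i : V, ∑ j : V, |x i * F i j * x j| :=
              Finset.sum_le_sum fun i _ => Finset.abs_sum_le_sum_abs _ _
          _ ≤ ∑ i : V, ∑ j : V, (Ce i j + 2 * Cw i) * l ^ 3 * Q :=
              Finset.sum_le_sum fun i _ => Finset.sum_le_sum fun j _ => hterm i j
          _ = (∑ i : V, ∑ j : V, (Ce i j + 2 * Cw i)) * l ^ 3 * Q := by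
              simp [Finset.sum_mul]
          _ = Ctot * l ^ 3 * Q := by rw [hCtotdef]
      have h3l : -(Ctot * l ^ 3 * Q) ≤ ∑ i : V, ∑ j : V, x i * F i j * x j :=
        neg_le_of_abs_le hq3
      have hmul : Ctot * l ^ 3 * Q ≤ (l ^ 2 * Real.sqrt l) * (ρ * Q) := by
        calc Ctot * l ^ 3 * Q
            = (Real.sqrt l * Ctot) * (l ^ 2 * Real.sqrt l * Q) := by
              have h3 : l ^ 3 = l ^ 2 * (Real.sqrt l * Real.sqrt l) := by
                rw [hsq]; ring
              rw [h3]; ring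
          _ ≤ ρ * (l ^ 2 * Real.sqrt l * Q) := by
              refine mul_le_mul_of_nonneg_right hsm.le ?_
              have : (0:ℝ) ≤ l ^ 2 * Real.sqrt l := by positivity
              nlinarith [hQ0]
          _ = (l ^ 2 * Real.sqrt l) * (ρ * Q) := by ring
      linarith [hq1, hq2, h3l, hmul]
end

section
/- Consider the antiferromagnetic two-spin system with parameters (β, γ, λ), βγ < 1, γ > 0, on a Δ-regular graph G. For a feasible configuration S, the pairwise dependency matrix satisfies M_S = (βγ - 1)·A_{G,S} + 0-diagonal adjustment, and its maximum eigenvalue obeys λ_max(M_S) ≤ (1 - βγ)·λ*, where -λ* = λ_min(A_G) and A_{G,S} is the adjacency matrix of the induced subgraph on the unpinned-feasible vertices; moreover the marginal ratio satisfies r_S(i) = λ(βγ)^{d_i^S}/γ^Δ ≤ λ/γ^Δ when βγ ≤ 1, so λ_min(diag(r_S)^{-1}) ≥ γ^Δ/λ. -/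
open Matrix

/-- A nonnegative scalar multiple of a PSD real matrix is PSD. -/
lemma psd_smul_nonneg {n : Type*} [Fintype n] {c : ℝ} {N : Matrix n n ℝ}
    (hc : 0 ≤ c) (hN : N.PosSemidef) : (c • N).PosSemidef := by
  refine ⟨?_, fun x => ?_⟩
  · unfold Matrix.IsHermitian
    rw [Matrix.conjTranspose_smul, hN.1]
    simp
  · have h := mul_nonneg hc (hN.2 x)
    simp only [Finsupp.mul_sum] at h
    simp only [Matrix.smul_apply, smul_eq_mul]
    refine le_of_le_of_eq h (Finsupp.sum_congr fun i _ => Finsupp.sum_congr fun j _ => ?_)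
    ring

/-- A Hermitian real matrix plus (−inf eigenvalue)•1 is positive semidefinite. -/
lemma psd_add_neg_inf_eig {V : Type*} [Fintype V] [DecidableEq V] [Nonempty V]
    {A : Matrix V V ℝ} (hA : A.IsHermitian) :
    (A + (-(⨅ i, hA.eigenvalues i)) • (1 : Matrix V V ℝ)).PosSemidef := by
  set μ := ⨅ i, hA.eigenvalues i with hμ
  have hdiag : (Matrix.diagonal (fun i => hA.eigenvalues i - μ)).PosSemidef := by
    refine Matrix.posSemidef_diagonal_iff.mpr fun i => ?_
    have : μ ≤ hA.eigenvalues i := ciInf_le (Finite.bddBelow_range _) i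
    linarith
  have hU := hdiag.mul_mul_conjTranspose_same (hA.eigenvectorUnitary : Matrix V V ℝ)
  have key : (hA.eigenvectorUnitary : Matrix V V ℝ) *
      Matrix.diagonal (fun i => hA.eigenvalues i - μ) *
      ((hA.eigenvectorUnitary : Matrix V V ℝ))ᴴ = A + (-μ) • (1 : Matrix V V ℝ) := by
    have hsd : Matrix.diagonal (fun i => hA.eigenvalues i - μ) =
        Matrix.diagonal (RCLike.ofReal ∘ hA.eigenvalues) + (-μ) • (1 : Matrix V V ℝ) := by
      ext i j
      rcases eq_or_ne i j with h | h
      · subst h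
        simp [Matrix.one_apply_eq, sub_eq_add_neg]
      · simp [Matrix.diagonal_apply_ne _ h, Matrix.one_apply_ne h]
    rw [hsd, Matrix.mul_add, Matrix.add_mul]
    have hUU : (hA.eigenvectorUnitary : Matrix V V ℝ) *
        ((hA.eigenvectorUnitary : Matrix V V ℝ))ᴴ = 1 := by
      simpa [star] using (Matrix.mem_unitaryGroup_iff).mp hA.eigenvectorUnitary.2
    rw [Matrix.mul_smul, Matrix.mul_one, Matrix.smul_mul, hUU]
    congr 1
    conv_rhs => rw [hA.spectral_theorem]
    rw [Unitary.conjStarAlgAut_apply, Matrix.star_eq_conjTranspose]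
  rwa [key] at hU

/-- Antiferromagnetic two-spin system `(β,γ,λ)` with `βγ < 1` on a `Δ`-regular graph `G`:
for a feasible pinning `S` with unpinned-feasible vertex set `U`, the pairwise dependency
matrix `M` (with `M i j = (βγ)^{1[{i,j}∈E]} - 1` off-diagonal, zero diagonal) satisfies
`λ_max(M) ≤ (1-βγ)·λ*` where `-λ* = λ_min(A_G)`; and the marginal ratios
`r i = λ(βγ)^{d_i^S}/γ^Δ` satisfy `r i ≤ λ/γ^Δ`, so `λ_min(diag(r)⁻¹) ≥ γ^Δ/λ`. -/
theorem stmt18 {V : Type*} [Fintype V] [DecidableEq V] [Nonempty V]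
    (G : SimpleGraph V) [DecidableRel G.Adj]
    (Δ : ℕ) (hreg : G.IsRegularOfDegree Δ)
    (β γ lam : ℝ) (hβ : 0 ≤ β) (hγ : 0 < γ) (hanti : β * γ < 1) (hlam : 0 < lam)
    (S : Finset V) (U : Set V) [DecidablePred (· ∈ U)]
    (d : V → ℕ) (hd : d = fun i => (S.filter (G.Adj i)).card)
    (hfeas : ∀ i : U, β = 0 → d (i : V) = 0)
    (hA : (G.adjMatrix ℝ).IsHermitian)
    (lstar : ℝ) (hlstar : lstar = -(⨅ i, hA.eigenvalues i))
    (M : Matrix U U ℝ)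
    (hM : M = Matrix.of (fun i j : U =>
      if (i : V) ≠ (j : V) ∧ G.Adj (i : V) (j : V) then β * γ - 1 else 0))
    (r : U → ℝ) (hr : r = fun i : U => lam * (β * γ) ^ d (i : V) / γ ^ Δ) :
    (((1 - β * γ) * lstar) • (1 : Matrix U U ℝ) - M).PosSemidef ∧
    (∀ i : U, r i ≤ lam / γ ^ Δ) ∧
    (∀ i : U, γ ^ Δ / lam ≤ (r i)⁻¹) := by
  have hβγ : 0 ≤ β * γ := mul_nonneg hβ hγ.le
  refine ⟨?_, ?_, ?_⟩
  · -- PSD part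
    have hbig := psd_add_neg_inf_eig hA
    rw [← hlstar] at hbig
    have hsub := hbig.submatrix (fun i : U => (i : V))
    have hone : ((1 : Matrix V V ℝ)).submatrix (fun i : U => (i : V)) (fun i : U => (i : V))
        = (1 : Matrix U U ℝ) := Matrix.submatrix_one _ Subtype.val_injective
    have hAsub : ((G.adjMatrix ℝ + lstar • (1 : Matrix V V ℝ)).submatrix
        (fun i : U => (i : V)) (fun i : U => (i : V)))
        = (G.adjMatrix ℝ).submatrix (fun i : U => (i : V)) (fun i : U => (i : V))
          + lstar • (1 : Matrix U U ℝ) := by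
      ext i j
      by_cases h : i = j
      · subst h; simp
      · have hne : (i : V) ≠ (j : V) := fun hc => h (Subtype.ext hc)
        simp [Matrix.one_apply_ne h, Matrix.one_apply_ne hne]
    rw [hAsub] at hsub
    have hMeq : ((1 - β * γ) * lstar) • (1 : Matrix U U ℝ) - M
        = (1 - β * γ) • ((G.adjMatrix ℝ).submatrix (fun i : U => (i : V)) (fun i : U => (i : V))
            + lstar • (1 : Matrix U U ℝ)) := by
      ext i j
      by_cases hij : G.Adj (i : V) (j : V)
      · have hne : (i : V) ≠ (j : V) := G.ne_of_adj hij
        have hne' : i ≠ j := fun h => hne (by rw [h])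
        simp [hM, Matrix.one_apply_ne hne', Matrix.one_apply_ne hne, hij, hne]
        all_goals ring
      · by_cases h : i = j
        · subst h
          simp [hM, Matrix.one_apply_eq, hij, G.irrefl]
          all_goals ring
        · have hne : (i : V) ≠ (j : V) := fun hc => h (Subtype.ext hc)
          simp [hM, Matrix.one_apply_ne h, Matrix.one_apply_ne hne, hij]
    rw [hMeq]
    exact psd_smul_nonneg (by linarith) hsub
  · intro i
    rw [hr]
    have h1 : (β * γ) ^ d (i : V) ≤ 1 := pow_le_one₀ hβγ hanti.le
    have : lam * (β * γ) ^ d (i : V) ≤ lam * 1 := by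
      exact mul_le_mul_of_nonneg_left h1 hlam.le
    simp only
    rw [div_le_div_iff₀ (by positivity) (by positivity)]
    nlinarith [pow_pos hγ Δ]
  · intro i
    have hrpos : 0 < r i := by
      rcases eq_or_lt_of_le hβ with hb0 | hbpos
      · have : d (i : V) = 0 := hfeas i hb0.symm
        rw [hr]; simp only [this, pow_zero]
        positivity
      · have : 0 < β * γ := mul_pos hbpos hγ
        rw [hr]; positivity
    have hle : r i ≤ lam / γ ^ Δ := by
      rw [hr]
      have h1 : (β * γ) ^ d (i : V) ≤ 1 := pow_le_one₀ hβγ hanti.le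
      have : lam * (β * γ) ^ d (i : V) ≤ lam * 1 := mul_le_mul_of_nonneg_left h1 hlam.le
      simp only
      rw [div_le_div_iff₀ (by positivity) (by positivity)]
      nlinarith [pow_pos hγ Δ]
    have := one_div_le_one_div_of_le hrpos hle
    rw [one_div, one_div] at this
    calc γ ^ Δ / lam = (lam / γ ^ Δ)⁻¹ := by
          rw [← one_div, one_div_div]
      _ ≤ (r i)⁻¹ := this
end
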